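/- Let C be a finite concept class over a finite domain with NCTD(C) = d, and let X(C) be the minimum number of distinct instances used by any non-clashing teacher mapping of order d for C. Then |C| ≤ 2^d · binomial(X(C), d). -/

import Mathlib

open Finset

variable {X : Type*} [DecidableEq X]

/-- A sample set `S` is consistent with concept `C`. -/
def Consistent (C : Finset X) (S : Finset (X × Bool)) : Prop :=
  ∀ p ∈ S, (p.1 ∈ C ↔ p.2 = true)

/-- `T` is a teacher mapping for the class `𝒞`. -/
def IsTeacher (𝒞 : Finset (Finset X)) (T : Finset X → Finset (X × Bool)) : Prop :=
  ∀ C ∈ 𝒞, Consistent C (T C)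

/-- `T` is non-clashing on `𝒞`. -/
def NonClashing (𝒞 : Finset (Finset X)) (T : Finset X → Finset (X × Bool)) : Prop :=
  ∀ C ∈ 𝒞, ∀ C' ∈ 𝒞, C ≠ C' → ¬ (Consistent C' (T C) ∧ Consistent C (T C'))

/-- The no-clash teaching dimension. -/
noncomputable def NCTD (𝒞 : Finset (Finset X)) : ℕ :=
  sInf {d | ∃ T : Finset X → Finset (X × Bool),
    IsTeacher 𝒞 T ∧ NonClashing 𝒞 T ∧ ∀ C ∈ 𝒞, (T C).card ≤ d}

/-- `T` is a positive teacher mapping for `𝒞` (positive examples only). -/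
def IsPosTeacher (𝒞 : Finset (Finset X)) (T : Finset X → Finset X) : Prop :=
  ∀ C ∈ 𝒞, T C ⊆ C

/-- A positive teacher mapping is non-clashing on `𝒞`. -/
def PosNonClashing (𝒞 : Finset (Finset X)) (T : Finset X → Finset X) : Prop :=
  ∀ C ∈ 𝒞, ∀ C' ∈ 𝒞, C ≠ C' → ¬ (T C ⊆ C' ∧ T C' ⊆ C)

/-- The positive no-clash teaching dimension. -/
noncomputable def NCTDplus (𝒞 : Finset (Finset X)) : ℕ :=
  sInf {d | ∃ T : Finset X → Finset X,
    IsPosTeacher 𝒞 T ∧ PosNonClashing 𝒞 T ∧ ∀ C ∈ 𝒞, (T C).card ≤ d}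

/-- The average no-clash teaching dimension (real-valued). -/
noncomputable def ANCTD (𝒞 : Finset (Finset X)) : ℝ :=
  sInf {q : ℝ | ∃ T : Finset X → Finset (X × Bool),
    IsTeacher 𝒞 T ∧ NonClashing 𝒞 T ∧
      q = (∑ C ∈ 𝒞, ((T C).card : ℝ)) / 𝒞.card}

/-- The number of neighbors of `C` in `𝒞` (concepts at symmetric difference one). -/
def degIn (𝒞 : Finset (Finset X)) (C : Finset X) : ℕ :=
  (𝒞.filter (fun C' => ((C \ C') ∪ (C' \ C)).card = 1)).card

/-- The average degree of `𝒞`. -/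
noncomputable def degAvg (𝒞 : Finset (Finset X)) : ℝ :=
  (∑ C ∈ 𝒞, (degIn 𝒞 C : ℝ)) / 𝒞.card

/-- The set of instances used by teacher mapping `T` on `𝒞`. -/
def usedInstances (𝒞 : Finset (Finset X)) (T : Finset X → Finset (X × Bool)) :
    Finset X :=
  𝒞.biUnion (fun C => (T C).image Prod.fst)

/-- `X(𝒞)`: the minimum number of instances used by an optimal
non-clashing teacher mapping for `𝒞`. -/
noncomputable def XC (𝒞 : Finset (Finset X)) : ℕ :=
  sInf {n | ∃ T : Finset X → Finset (X × Bool),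
    IsTeacher 𝒞 T ∧ NonClashing 𝒞 T ∧
      (∀ C ∈ 𝒞, (T C).card ≤ NCTD 𝒞) ∧ (usedInstances 𝒞 T).card = n}

/-- if `NCTD(𝒞) = d` then `|𝒞| ≤ 2^d * (X(𝒞) choose d)`. -/
theorem card_le_of_NCTD {X : Type*} [DecidableEq X] [Fintype X]
    (𝒞 : Finset (Finset X)) (d : ℕ) (hd : NCTD 𝒞 = d) :
    𝒞.card ≤ 2 ^ d * (XC 𝒞).choose d := by
  classical
  -- The NCTD set is nonempty
  have hne : {d | ∃ T : Finset X → Finset (X × Bool),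
      IsTeacher 𝒞 T ∧ NonClashing 𝒞 T ∧ ∀ C ∈ 𝒞, (T C).card ≤ d}.Nonempty := by
    refine ⟨Fintype.card X, fun C => Finset.univ.image (fun x => (x, decide (x ∈ C))),
      ?_, ?_, ?_⟩
    · intro C hC p hp
      simp only [Finset.mem_image, Finset.mem_univ, true_and] at hp
      obtain ⟨x, hx⟩ := hp
      subst hx
      simp
    · intro C hC C' hC' hCC' ⟨h1, h2⟩
      apply hCC'
      ext x
      have := h1 (x, decide (x ∈ C)) (by simp)
      simpa using this.symm
    · intro C hC
      exact Finset.card_image_le.trans_eq Finset.card_univ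
  obtain ⟨T0, hT0, hNC0, hcard0⟩ := Nat.sInf_mem hne
  -- The XC set is nonempty
  have hXne : {n | ∃ T : Finset X → Finset (X × Bool),
      IsTeacher 𝒞 T ∧ NonClashing 𝒞 T ∧
        (∀ C ∈ 𝒞, (T C).card ≤ NCTD 𝒞) ∧ (usedInstances 𝒞 T).card = n}.Nonempty :=
    ⟨(usedInstances 𝒞 T0).card, T0, hT0, hNC0, hcard0, rfl⟩
  obtain ⟨T, hT, hNC, hcard, hused⟩ := Nat.sInf_mem hXne
  set U := usedInstances 𝒞 T with hUdef
  set n := XC 𝒞 with hndef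
  have hUcard : U.card = n := hused
  have hcardd : ∀ C ∈ 𝒞, (T C).card ≤ d := by
    intro C hC; rw [← hd]; exact hcard C hC
  -- instances of T C lie in U
  have hTU : ∀ C ∈ 𝒞, (T C).image Prod.fst ⊆ U := by
    intro C hC x hx
    exact Finset.mem_biUnion.2 ⟨C, hC, hx⟩
  -- agreement on a set containing both sample-instance sets forces equality
  have hagree : ∀ C ∈ 𝒞, ∀ C' ∈ 𝒞, ∀ V : Finset X,
      (T C).image Prod.fst ⊆ V → (T C').image Prod.fst ⊆ V →
      (∀ x ∈ V, (x ∈ C ↔ x ∈ C')) → C = C' := by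
    intro C hC C' hC' V hV hV' hag
    by_contra hne'
    refine hNC C hC C' hC' hne' ⟨?_, ?_⟩
    · intro p hp
      have h1 : p.1 ∈ V := hV (Finset.mem_image_of_mem Prod.fst hp)
      have h2 := hT C hC p hp
      rw [← hag p.1 h1]; exact h2
    · intro p hp
      have h1 : p.1 ∈ V := hV' (Finset.mem_image_of_mem Prod.fst hp)
      have h2 := hT C' hC' p hp
      rw [hag p.1 h1]; exact h2
  -- d ≤ n
  have hdn : d ≤ n := by
    by_contra hlt
    push_neg at hlt
    have : NCTD 𝒞 ≤ n := by
      apply Nat.sInf_le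
      refine ⟨fun C => U.image (fun x => (x, decide (x ∈ C))), ?_, ?_, ?_⟩
      · intro C hC p hp
        simp only [Finset.mem_image] at hp
        obtain ⟨x, _, hx⟩ := hp
        subst hx
        simp
      · intro C hC C' hC' hCC' ⟨h1, h2⟩
        apply hCC'
        apply hagree C hC C' hC' U (hTU C hC) (hTU C' hC')
        intro x hx
        have := h1 (x, decide (x ∈ C)) (Finset.mem_image_of_mem _ hx)
        simpa using this.symm
      · intro C hC
        calc (U.image (fun x => (x, decide (x ∈ C)))).card ≤ U.card :=
              Finset.card_image_le
          _ = n := hUcard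
    exact absurd (hd ▸ this) (Nat.not_le.2 hlt)
  -- padding
  have hpad : ∀ C ∈ 𝒞, ∃ S, (T C).image Prod.fst ⊆ S ∧ S ⊆ U ∧ S.card = d := by
    intro C hC
    apply Finset.exists_subsuperset_card_eq (hTU C hC)
    · exact le_trans Finset.card_image_le (hcardd C hC)
    · rw [hUcard]; exact hdn
  choose! pad hpad1 hpad2 hpad3 using hpad
  -- the injection
  have hinj : 𝒞.card ≤ ((U.powersetCard d).sigma (fun S => S.powerset)).card := by
    apply Finset.card_le_card_of_injOn
      (fun C => (⟨pad C, C ∩ pad C⟩ : Σ _ : Finset X, Finset X))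
    · intro C hC
      simp only [Finset.mem_coe, Finset.mem_sigma, Finset.mem_powersetCard, Finset.mem_powerset]
      exact ⟨⟨hpad2 C hC, hpad3 C hC⟩, Finset.inter_subset_right⟩
    · intro C hC C' hC' heq
      have hp : pad C = pad C' := congrArg Sigma.fst heq
      have hi' : C ∩ pad C = C' ∩ pad C := by
        have h2 : C ∩ pad C = C' ∩ pad C' := congrArg Sigma.snd heq
        rw [h2, hp]
      refine hagree C hC C' hC' (pad C) (hpad1 C hC) (hp ▸ hpad1 C' hC') ?_
      intro x hx
      constructor
      · intro h
        have : x ∈ C' ∩ pad C := hi' ▸ Finset.mem_inter.2 ⟨h, hx⟩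
        exact (Finset.mem_inter.1 this).1
      · intro h
        have : x ∈ C ∩ pad C := hi' ▸ Finset.mem_inter.2 ⟨h, hx⟩
        exact (Finset.mem_inter.1 this).1
  -- counting
  have hcount : ((U.powersetCard d).sigma (fun S => S.powerset)).card
      = 2 ^ d * n.choose d := by
    rw [Finset.card_sigma]
    have : ∀ S ∈ U.powersetCard d, S.powerset.card = 2 ^ d := by
      intro S hS
      rw [Finset.card_powerset, (Finset.mem_powersetCard.1 hS).2]
    rw [Finset.sum_congr rfl this, Finset.sum_const, Finset.card_powersetCard,
      hUcard, smul_eq_mul, mul_comm]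
  exact le_of_le_of_eq hinj hcount
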